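/- The worst-case expectation sup over the TV ball admits the LP duality reformulation: for a finite set Ξ, a function ℓ: Ξ → ℝ, a conditional distribution O, an empirical distribution P̂' on Ξ', and ε ≥ 0, sup_{Q ∈ Δ(Ξ) : Σ_{ξ'}|P̂'(ξ') − (O⋆Q)(ξ')| ≤ 2ε} Σ_ξ ℓ(ξ)Q(ξ) = inf_{λ,μ ≥ 0} [ max_ξ (ℓ(ξ) + Σ_{ξ'} (λ(ξ') − μ(ξ'))O(ξ'|ξ)) + 2ε·max_{ξ'} (λ(ξ') + μ(ξ')) + Σ_{ξ'} (μ(ξ') − λ(ξ'))P̂'(ξ') ], provided there exists a strictly feasible Q (e.g., some P ∈ Δ(Ξ) with O⋆P = P' and d_TV(P', P̂') < ε). -/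

import Mathlib

open Finset

/-- If `x + t*K < y` for all positive `t`, then `x ≤ y`. -/
lemma stmt7_aux_le (x y K : ℝ) (h : ∀ t : ℝ, 0 < t → x + t * K < y) : x ≤ y := by
  by_contra h'
  push_neg at h'
  set t : ℝ := (x - y) / (2 * (|K| + 1)) with ht
  have hK : (0:ℝ) < |K| + 1 := by positivity
  have htpos : 0 < t := by
    apply div_pos (by linarith) (by positivity)
  have h1 := h t htpos
  have h2 : t * -|K| ≤ t * K := mul_le_mul_of_nonneg_left (neg_abs_le K) htpos.le
  rw [mul_neg] at h2
  have h3 : t * (|K| + 1) = (x - y) / 2 := by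
    rw [ht]; field_simp
  have h4 : t * |K| ≤ t * (|K| + 1) := by nlinarith
  linarith

/-- If `x + t*K < y` for all positive `t`, then `K ≤ 0`. -/
lemma stmt7_aux_slope (x y K : ℝ) (h : ∀ t : ℝ, 0 < t → x + t * K < y) : K ≤ 0 := by
  by_contra h'
  push_neg at h'
  have ht : 0 < max 1 ((y - x) / K) := lt_max_of_lt_left one_pos
  have h1 := h _ ht
  have h2 : (y - x) / K ≤ max 1 ((y - x) / K) := le_max_right _ _
  have h3 : (y - x) / K * K ≤ max 1 ((y - x) / K) * K :=
    mul_le_mul_of_nonneg_right h2 h'.le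
  rw [div_mul_cancel₀ _ h'.ne'] at h3
  linarith

/-- If `x + s*K ≤ y` for all real `s`, then `K = 0`. -/
lemma stmt7_aux_zero (x y K : ℝ) (h : ∀ s : ℝ, x + s * K ≤ y) : K = 0 := by
  rcases lt_trichotomy K 0 with hK | hK | hK
  · have h1 := h ((y - x + 1) / K)
    rw [div_mul_cancel₀ _ hK.ne] at h1
    linarith
  · exact hK
  · have h1 := h ((y - x + 1) / K)
    rw [div_mul_cancel₀ _ hK.ne'] at h1
    linarith

/-- A finite nonempty sup is attained. -/
lemma stmt7_aux_sup {ι : Type*} [Fintype ι] [Nonempty ι] (f : ι → ℝ) :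
    ∃ i, (⨆ j, f j) = f i ∧ ∀ j, f j ≤ f i := by
  obtain ⟨i, -, hi⟩ := Finset.exists_max_image Finset.univ f ⟨Classical.arbitrary ι, Finset.mem_univ _⟩
  exact ⟨i, le_antisymm (ciSup_le fun j => hi j (Finset.mem_univ j))
    (le_ciSup (Set.Finite.bddAbove (Set.finite_range f)) i), fun j => hi j (Finset.mem_univ j)⟩

/-- LP strong duality for the worst-case expectation over the TV ball. -/
theorem stmt7 {Ξ Ξ' : Type*} [Fintype Ξ] [Fintype Ξ'] [Nonempty Ξ] [Nonempty Ξ']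
    (O : Ξ' → Ξ → ℝ)  -- `O ξ' ξ` denotes O(ξ'|ξ)
    (hO_nonneg : ∀ ξ' ξ, 0 ≤ O ξ' ξ)
    (hO_sum : ∀ ξ, ∑ ξ', O ξ' ξ = 1)
    (ℓ : Ξ → ℝ) (Phat : Ξ' → ℝ)
    (hPhat_nonneg : ∀ ξ', 0 ≤ Phat ξ') (hPhat_sum : ∑ ξ', Phat ξ' = 1)
    (ε : ℝ) (hε : 0 ≤ ε)
    -- Slater condition: a strictly feasible distribution exists
    (hslater : ∃ Q : Ξ → ℝ, (∀ ξ, 0 ≤ Q ξ) ∧ (∑ ξ, Q ξ = 1) ∧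
      ∑ ξ', |Phat ξ' - ∑ ξ, O ξ' ξ * Q ξ| < 2 * ε) :
    sSup {v : ℝ | ∃ Q : Ξ → ℝ, (∀ ξ, 0 ≤ Q ξ) ∧ (∑ ξ, Q ξ = 1) ∧
        (∑ ξ', |Phat ξ' - ∑ ξ, O ξ' ξ * Q ξ|) ≤ 2 * ε ∧
        v = ∑ ξ, ℓ ξ * Q ξ}
      = sInf {w : ℝ | ∃ lam mu : Ξ' → ℝ, (∀ ξ', 0 ≤ lam ξ') ∧ (∀ ξ', 0 ≤ mu ξ') ∧
        w = (⨆ ξ : Ξ, (ℓ ξ + ∑ ξ', (lam ξ' - mu ξ') * O ξ' ξ))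
            + 2 * ε * (⨆ ξ' : Ξ', (lam ξ' + mu ξ'))
            + ∑ ξ', (mu ξ' - lam ξ') * Phat ξ'} := by
  classical
  obtain ⟨Q₀, hQ₀n, hQ₀s, hQ₀f⟩ := hslater
  set S : Set ℝ := {v : ℝ | ∃ Q : Ξ → ℝ, (∀ ξ, 0 ≤ Q ξ) ∧ (∑ ξ, Q ξ = 1) ∧
        (∑ ξ', |Phat ξ' - ∑ ξ, O ξ' ξ * Q ξ|) ≤ 2 * ε ∧
        v = ∑ ξ, ℓ ξ * Q ξ} with hSdef
  set T : Set ℝ := {w : ℝ | ∃ lam mu : Ξ' → ℝ, (∀ ξ', 0 ≤ lam ξ') ∧ (∀ ξ', 0 ≤ mu ξ') ∧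
        w = (⨆ ξ : Ξ, (ℓ ξ + ∑ ξ', (lam ξ' - mu ξ') * O ξ' ξ))
            + 2 * ε * (⨆ ξ' : Ξ', (lam ξ' + mu ξ'))
            + ∑ ξ', (mu ξ' - lam ξ') * Phat ξ'} with hTdef
  -- expectation against a simplex element is at most the sup
  have simplex_bound : ∀ (h : Ξ → ℝ) (Q : Ξ → ℝ), (∀ ξ, 0 ≤ Q ξ) → (∑ ξ, Q ξ) = 1 →
      ∑ ξ, h ξ * Q ξ ≤ ⨆ ξ, h ξ := by
    intro h Q hQn hQs
    obtain ⟨i, hieq, hile⟩ := stmt7_aux_sup h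
    calc ∑ ξ, h ξ * Q ξ ≤ ∑ ξ, h i * Q ξ :=
          Finset.sum_le_sum fun ξ _ => mul_le_mul_of_nonneg_right (hile ξ) (hQn ξ)
      _ = h i := by rw [← Finset.mul_sum, hQs, mul_one]
      _ = ⨆ ξ, h ξ := hieq.symm
  have hQ₀S : (∑ ξ, ℓ ξ * Q₀ ξ) ∈ S := ⟨Q₀, hQ₀n, hQ₀s, hQ₀f.le, rfl⟩
  have hSne : S.Nonempty := ⟨_, hQ₀S⟩
  have hSbdd : BddAbove S := ⟨⨆ ξ, ℓ ξ, by
    rintro v ⟨Q, hn, hs, hfe, rfl⟩; exact simplex_bound ℓ Q hn hs⟩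
  set pstar := sSup S with hpstar
  -- weak duality
  have weak : ∀ v ∈ S, ∀ w ∈ T, v ≤ w := by
    rintro v ⟨Q, hQn, hQs, hQf, rfl⟩ w ⟨lam, mu, hlam, hmu, rfl⟩
    obtain ⟨j, hjeq, hjle⟩ := stmt7_aux_sup (fun ξ' => lam ξ' + mu ξ')
    set M := ⨆ ξ' : Ξ', (lam ξ' + mu ξ') with hM
    have hM0 : 0 ≤ M := by rw [hjeq]; exact add_nonneg (hlam j) (hmu j)
    have swap : ∑ ξ, (∑ ξ', (lam ξ' - mu ξ') * O ξ' ξ) * Q ξ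
        = ∑ ξ', (lam ξ' - mu ξ') * ∑ ξ, O ξ' ξ * Q ξ := by
      calc ∑ ξ, (∑ ξ', (lam ξ' - mu ξ') * O ξ' ξ) * Q ξ
          = ∑ ξ, ∑ ξ', ((lam ξ' - mu ξ') * O ξ' ξ) * Q ξ :=
            Finset.sum_congr rfl fun ξ _ => Finset.sum_mul _ _ _
        _ = ∑ ξ', ∑ ξ, ((lam ξ' - mu ξ') * O ξ' ξ) * Q ξ := Finset.sum_comm
        _ = ∑ ξ', (lam ξ' - mu ξ') * ∑ ξ, O ξ' ξ * Q ξ := by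
            refine Finset.sum_congr rfl fun ξ' _ => ?_
            rw [Finset.mul_sum]
            exact Finset.sum_congr rfl fun ξ _ => by ring
    have distrib : ∑ ξ, (ℓ ξ + ∑ ξ', (lam ξ' - mu ξ') * O ξ' ξ) * Q ξ
        = ∑ ξ, ℓ ξ * Q ξ + ∑ ξ, (∑ ξ', (lam ξ' - mu ξ') * O ξ' ξ) * Q ξ := by
      rw [← Finset.sum_add_distrib]
      exact Finset.sum_congr rfl fun ξ _ => by ring
    have negid : ∑ ξ', (mu ξ' - lam ξ') * (∑ ξ, O ξ' ξ * Q ξ)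
        = -∑ ξ', (lam ξ' - mu ξ') * (∑ ξ, O ξ' ξ * Q ξ) := by
      rw [← Finset.sum_neg_distrib]
      exact Finset.sum_congr rfl fun _ _ => by ring
    have e2 : ∑ ξ, (ℓ ξ + ∑ ξ', (lam ξ' - mu ξ') * O ξ' ξ) * Q ξ
        ≤ ⨆ ξ, (ℓ ξ + ∑ ξ', (lam ξ' - mu ξ') * O ξ' ξ) :=
      simplex_bound _ Q hQn hQs
    have e3 : ∀ ξ', (mu ξ' - lam ξ') * (∑ ξ, O ξ' ξ * Q ξ)
        ≤ (mu ξ' - lam ξ') * Phat ξ' + M * |Phat ξ' - ∑ ξ, O ξ' ξ * Q ξ| := by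
      intro ξ'
      have habs : |mu ξ' - lam ξ'| ≤ M := by
        rw [hjeq]
        have h1 := hjle ξ'
        have h2 := hlam ξ'
        have h3 := hmu ξ'
        rw [abs_le]
        constructor <;> linarith
      have h1 : (mu ξ' - lam ξ') * ((∑ ξ, O ξ' ξ * Q ξ) - Phat ξ')
          ≤ M * |Phat ξ' - ∑ ξ, O ξ' ξ * Q ξ| := by
        calc (mu ξ' - lam ξ') * ((∑ ξ, O ξ' ξ * Q ξ) - Phat ξ')
            ≤ |(mu ξ' - lam ξ') * ((∑ ξ, O ξ' ξ * Q ξ) - Phat ξ')| := le_abs_self _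
          _ = |mu ξ' - lam ξ'| * |Phat ξ' - ∑ ξ, O ξ' ξ * Q ξ| := by
              rw [abs_mul, abs_sub_comm (∑ ξ, O ξ' ξ * Q ξ)]
          _ ≤ M * |Phat ξ' - ∑ ξ, O ξ' ξ * Q ξ| :=
              mul_le_mul_of_nonneg_right habs (abs_nonneg _)
      have h2 : (mu ξ' - lam ξ') * (∑ ξ, O ξ' ξ * Q ξ)
          = (mu ξ' - lam ξ') * Phat ξ'
            + (mu ξ' - lam ξ') * ((∑ ξ, O ξ' ξ * Q ξ) - Phat ξ') := by ring
      linarith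
    have e4 : ∑ ξ', (mu ξ' - lam ξ') * (∑ ξ, O ξ' ξ * Q ξ)
        ≤ ∑ ξ', (mu ξ' - lam ξ') * Phat ξ' + M * (2 * ε) := by
      calc ∑ ξ', (mu ξ' - lam ξ') * (∑ ξ, O ξ' ξ * Q ξ)
          ≤ ∑ ξ', ((mu ξ' - lam ξ') * Phat ξ' + M * |Phat ξ' - ∑ ξ, O ξ' ξ * Q ξ|) :=
            Finset.sum_le_sum fun ξ' _ => e3 ξ'
        _ = ∑ ξ', (mu ξ' - lam ξ') * Phat ξ'
            + M * ∑ ξ', |Phat ξ' - ∑ ξ, O ξ' ξ * Q ξ| := by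
            rw [Finset.sum_add_distrib, Finset.mul_sum]
        _ ≤ ∑ ξ', (mu ξ' - lam ξ') * Phat ξ' + M * (2 * ε) := by
            have := mul_le_mul_of_nonneg_left hQf hM0
            linarith
    linarith [e2, e4, swap, distrib, negid]
  -- the separation argument
  set g1 : (Ξ → ℝ) → (Ξ' → ℝ) → Ξ' → ℝ :=
    fun Q u ξ' => Phat ξ' - (∑ ξ, O ξ' ξ * Q ξ) - u ξ' with hg1def
  set g2 : (Ξ → ℝ) → (Ξ' → ℝ) → Ξ' → ℝ :=
    fun Q u ξ' => (∑ ξ, O ξ' ξ * Q ξ) - Phat ξ' - u ξ' with hg2def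
  set A : Set (((Ξ' ⊕ Ξ') ⊕ Fin 2) → ℝ) := {p | ∃ Q : Ξ → ℝ, ∃ u : Ξ' → ℝ,
    (∀ ξ, 0 ≤ Q ξ) ∧ (∑ ξ, Q ξ) = 1 ∧
    (∀ ξ', g1 Q u ξ' < p (Sum.inl (Sum.inl ξ'))) ∧
    (∀ ξ', g2 Q u ξ' < p (Sum.inl (Sum.inr ξ'))) ∧
    ((∑ ξ', u ξ') - 2 * ε < p (Sum.inr 0)) ∧
    (p (Sum.inr 1) < ∑ ξ, ℓ ξ * Q ξ)} with hAdef
  have hAopen : IsOpen A := by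
    rw [isOpen_iff_mem_nhds]
    rintro p ⟨Q, u, hn, hs, h1, h2, h3, h4⟩
    have hU : IsOpen ((⋂ ξ', {q : ((Ξ' ⊕ Ξ') ⊕ Fin 2) → ℝ | g1 Q u ξ' < q (Sum.inl (Sum.inl ξ'))}) ∩
        ((⋂ ξ', {q : ((Ξ' ⊕ Ξ') ⊕ Fin 2) → ℝ | g2 Q u ξ' < q (Sum.inl (Sum.inr ξ'))}) ∩
        ({q : ((Ξ' ⊕ Ξ') ⊕ Fin 2) → ℝ | (∑ ξ', u ξ') - 2 * ε < q (Sum.inr 0)} ∩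
        {q : ((Ξ' ⊕ Ξ') ⊕ Fin 2) → ℝ | q (Sum.inr 1) < ∑ ξ, ℓ ξ * Q ξ}))) := by
      refine IsOpen.inter ?_ (IsOpen.inter ?_ (IsOpen.inter ?_ ?_))
      · exact isOpen_iInter_of_finite fun ξ' =>
          isOpen_lt continuous_const (continuous_apply _)
      · exact isOpen_iInter_of_finite fun ξ' =>
          isOpen_lt continuous_const (continuous_apply _)
      · exact isOpen_lt continuous_const (continuous_apply _)
      · exact isOpen_lt (continuous_apply _) continuous_const
    refine Filter.mem_of_superset (hU.mem_nhds ?_) ?_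
    · exact ⟨Set.mem_iInter.2 h1, Set.mem_iInter.2 h2, h3, h4⟩
    · rintro q ⟨hq1, hq2, hq3, hq4⟩
      exact ⟨Q, u, hn, hs, fun ξ' => Set.mem_iInter.1 hq1 ξ',
        fun ξ' => Set.mem_iInter.1 hq2 ξ', hq3, hq4⟩
  have hAconv : Convex ℝ A := by
    rintro p ⟨Qp, up, hpn, hps, hp1, hp2, hp3, hp4⟩ q ⟨Qq, uq, hqn, hqs, hq1, hq2, hq3, hq4⟩
      a b ha hb hab
    have combo : ∀ {x x' y y' : ℝ}, x < x' → y < y' → a * x + b * y < a * x' + b * y' := by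
      intro x x' y y' hx hy
      rcases ha.lt_or_eq with ha' | ha'
      · exact add_lt_add_of_lt_of_le (mul_lt_mul_of_pos_left hx ha')
          (mul_le_mul_of_nonneg_left hy.le hb)
      · have hb' : 0 < b := by rw [← ha'] at hab; linarith
        rw [← ha', zero_mul, zero_mul, zero_add, zero_add]
        exact mul_lt_mul_of_pos_left hy hb'
    have expandO : ∀ ξ', ∑ ξ, O ξ' ξ * (a * Qp ξ + b * Qq ξ)
        = a * (∑ ξ, O ξ' ξ * Qp ξ) + b * (∑ ξ, O ξ' ξ * Qq ξ) := by
      intro ξ'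
      rw [Finset.mul_sum, Finset.mul_sum, ← Finset.sum_add_distrib]
      exact Finset.sum_congr rfl fun ξ _ => by ring
    have expandL : ∑ ξ, ℓ ξ * (a * Qp ξ + b * Qq ξ)
        = a * (∑ ξ, ℓ ξ * Qp ξ) + b * (∑ ξ, ℓ ξ * Qq ξ) := by
      rw [Finset.mul_sum, Finset.mul_sum, ← Finset.sum_add_distrib]
      exact Finset.sum_congr rfl fun ξ _ => by ring
    have hb1 : b = 1 - a := by linarith
    refine ⟨fun ξ => a * Qp ξ + b * Qq ξ, fun ξ' => a * up ξ' + b * uq ξ',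
      fun ξ => add_nonneg (mul_nonneg ha (hpn ξ)) (mul_nonneg hb (hqn ξ)), ?_, ?_, ?_, ?_, ?_⟩
    · rw [Finset.sum_add_distrib, ← Finset.mul_sum, ← Finset.mul_sum, hps, hqs,
        mul_one, mul_one]; exact hab
    · intro ξ'
      have key := combo (hp1 ξ') (hq1 ξ')
      simp only [Pi.add_apply, Pi.smul_apply, smul_eq_mul, hg1def]
      calc Phat ξ' - (∑ ξ, O ξ' ξ * (a * Qp ξ + b * Qq ξ)) - (a * up ξ' + b * uq ξ')
          = a * (g1 Qp up ξ') + b * (g1 Qq uq ξ') := by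
            rw [expandO ξ', hg1def, hb1]; ring
        _ < a * p (Sum.inl (Sum.inl ξ')) + b * q (Sum.inl (Sum.inl ξ')) := key
    · intro ξ'
      have key := combo (hp2 ξ') (hq2 ξ')
      simp only [Pi.add_apply, Pi.smul_apply, smul_eq_mul, hg2def]
      calc (∑ ξ, O ξ' ξ * (a * Qp ξ + b * Qq ξ)) - Phat ξ' - (a * up ξ' + b * uq ξ')
          = a * (g2 Qp up ξ') + b * (g2 Qq uq ξ') := by
            rw [expandO ξ', hg2def, hb1]; ring
        _ < a * p (Sum.inl (Sum.inr ξ')) + b * q (Sum.inl (Sum.inr ξ')) := key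
    · have key := combo hp3 hq3
      simp only [Pi.add_apply, Pi.smul_apply, smul_eq_mul]
      calc (∑ ξ', (a * up ξ' + b * uq ξ')) - 2 * ε
          = a * ((∑ ξ', up ξ') - 2 * ε) + b * ((∑ ξ', uq ξ') - 2 * ε) := by
            rw [Finset.sum_add_distrib, ← Finset.mul_sum, ← Finset.mul_sum, hb1]; ring
        _ < a * p (Sum.inr 0) + b * q (Sum.inr 0) := key
    · have key := combo hp4 hq4
      simp only [Pi.add_apply, Pi.smul_apply, smul_eq_mul]
      calc (a • p + b • q) (Sum.inr 1) = a * p (Sum.inr 1) + b * q (Sum.inr 1) := by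
            simp [Pi.add_apply, Pi.smul_apply, smul_eq_mul]
        _ < a * (∑ ξ, ℓ ξ * Qp ξ) + b * (∑ ξ, ℓ ξ * Qq ξ) := key
        _ = ∑ ξ, ℓ ξ * (a * Qp ξ + b * Qq ξ) := expandL.symm
  -- Slater point with slack
  set δ : ℝ := (2 * ε - ∑ ξ', |Phat ξ' - ∑ ξ, O ξ' ξ * Q₀ ξ|) / (Fintype.card Ξ' + 1) with hδdef
  have hδ : 0 < δ := div_pos (by linarith) (by positivity)
  set u₀ : Ξ' → ℝ := fun ξ' => |Phat ξ' - ∑ ξ, O ξ' ξ * Q₀ ξ| + δ with hu₀def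
  have hg1₀ : ∀ ξ', g1 Q₀ u₀ ξ' ≤ -δ := by
    intro ξ'
    have := le_abs_self (Phat ξ' - ∑ ξ, O ξ' ξ * Q₀ ξ)
    simp only [hg1def, hu₀def]
    linarith
  have hg2₀ : ∀ ξ', g2 Q₀ u₀ ξ' ≤ -δ := by
    intro ξ'
    have := neg_abs_le (Phat ξ' - ∑ ξ, O ξ' ξ * Q₀ ξ)
    simp only [hg2def, hu₀def]
    linarith
  have hg3₀ : (∑ ξ', u₀ ξ') - 2 * ε = -δ := by
    have hkey : ((Fintype.card Ξ' : ℝ) + 1) * δ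
        = 2 * ε - ∑ ξ', |Phat ξ' - ∑ ξ, O ξ' ξ * Q₀ ξ| := by
      rw [hδdef, mul_div_cancel₀]
      positivity
    have hsum : ∑ ξ', u₀ ξ'
        = (∑ ξ', |Phat ξ' - ∑ ξ, O ξ' ξ * Q₀ ξ|) + (Fintype.card Ξ' : ℝ) * δ := by
      rw [hu₀def, Finset.sum_add_distrib, Finset.sum_const, Finset.card_univ, nsmul_eq_mul]
    rw [hsum]
    linarith
  set p₀ : ((Ξ' ⊕ Ξ') ⊕ Fin 2) → ℝ := Pi.single (Sum.inr 1) ((∑ ξ, ℓ ξ * Q₀ ξ) - 1) with hp₀def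
  have hp₀A : p₀ ∈ A := by
    refine ⟨Q₀, u₀, hQ₀n, hQ₀s, ?_, ?_, ?_, ?_⟩
    · intro ξ'
      have h := hg1₀ ξ'
      have : p₀ (Sum.inl (Sum.inl ξ')) = 0 := by simp [hp₀def, Pi.single_apply]
      rw [this]; linarith
    · intro ξ'
      have h := hg2₀ ξ'
      have : p₀ (Sum.inl (Sum.inr ξ')) = 0 := by simp [hp₀def, Pi.single_apply]
      rw [this]; linarith
    · have : p₀ (Sum.inr 0) = 0 := by
        simp [hp₀def, Pi.single_apply]
      rw [this, hg3₀]; linarith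
    · have : p₀ (Sum.inr 1) = (∑ ξ, ℓ ξ * Q₀ ξ) - 1 := by simp [hp₀def, Pi.single_apply]
      rw [this]; linarith
  set xstar : ((Ξ' ⊕ Ξ') ⊕ Fin 2) → ℝ := Pi.single (Sum.inr 1) pstar with hxstardef
  have hxstar : xstar ∉ A := by
    rintro ⟨Q, u, hn, hs, h1, h2, h3, h4⟩
    have hz1 : ∀ ξ', xstar (Sum.inl (Sum.inl ξ')) = 0 := by
      intro ξ'; simp [hxstardef, Pi.single_apply]
    have hz2 : ∀ ξ', xstar (Sum.inl (Sum.inr ξ')) = 0 := by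
      intro ξ'; simp [hxstardef, Pi.single_apply]
    have hz3 : xstar (Sum.inr 0) = 0 := by simp [hxstardef, Pi.single_apply]
    have hz4 : xstar (Sum.inr 1) = pstar := by simp [hxstardef, Pi.single_apply]
    rw [hz4] at h4
    have hfe : ∑ ξ', |Phat ξ' - ∑ ξ, O ξ' ξ * Q ξ| ≤ 2 * ε := by
      have hstep : ∑ ξ', |Phat ξ' - ∑ ξ, O ξ' ξ * Q ξ| ≤ ∑ ξ', u ξ' := by
        refine Finset.sum_le_sum fun ξ' _ => ?_
        have ha := h1 ξ'; rw [hz1 ξ'] at ha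
        have hb := h2 ξ'; rw [hz2 ξ'] at hb
        simp only [hg1def] at ha
        simp only [hg2def] at hb
        rw [abs_le]; constructor <;> linarith
      rw [hz3] at h3
      linarith
    have hmem : (∑ ξ, ℓ ξ * Q ξ) ∈ S := ⟨Q, hn, hs, hfe, rfl⟩
    have := le_csSup hSbdd hmem
    rw [← hpstar] at this
    linarith
  obtain ⟨f, hf⟩ := geometric_hahn_banach_open_point hAconv hAopen hxstar
  set coef : ((Ξ' ⊕ Ξ') ⊕ Fin 2) → ℝ := fun i => f (Pi.single i 1) with hcoefdef
  have hcoef : ∀ i, f (Pi.single i 1) = coef i := fun i => rfl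
  have hrep : ∀ p : ((Ξ' ⊕ Ξ') ⊕ Fin 2) → ℝ, f p = ∑ i, p i * coef i := by
    intro p
    conv_lhs => rw [← Finset.univ_sum_single p]
    rw [map_sum]
    refine Finset.sum_congr rfl fun i _ => ?_
    have h1 : (Pi.single i (p i) : ((Ξ' ⊕ Ξ') ⊕ Fin 2) → ℝ)
        = p i • (Pi.single i (1:ℝ) : ((Ξ' ⊕ Ξ') ⊕ Fin 2) → ℝ) := by
      rw [← Pi.single_smul, smul_eq_mul, mul_one]
    rw [h1, map_smul, smul_eq_mul, hcoef]
  have hsplit : ∀ p : ((Ξ' ⊕ Ξ') ⊕ Fin 2) → ℝ,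
      f p = (∑ ξ', p (Sum.inl (Sum.inl ξ')) * coef (Sum.inl (Sum.inl ξ')))
        + (∑ ξ', p (Sum.inl (Sum.inr ξ')) * coef (Sum.inl (Sum.inr ξ')))
        + p (Sum.inr 0) * coef (Sum.inr 0) + p (Sum.inr 1) * coef (Sum.inr 1) := by
    intro p
    rw [hrep p, Fintype.sum_sum_type, Fintype.sum_sum_type, Fin.sum_univ_two]
    ring
  have hfx : f xstar = pstar * coef (Sum.inr 1) := by
    rw [hsplit]
    simp [hxstardef, Pi.single_apply]
  -- sign of the coefficients
  have hcoef_le : ∀ i : (Ξ' ⊕ Ξ') ⊕ Fin 2, i ≠ Sum.inr 1 → coef i ≤ 0 := by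
    intro i hi
    refine stmt7_aux_slope (f p₀) (f xstar) (coef i) fun t ht => ?_
    have hmem : (p₀ + t • (Pi.single i (1:ℝ) : ((Ξ' ⊕ Ξ') ⊕ Fin 2) → ℝ)) ∈ A := by
      obtain ⟨Q, u, hn, hs, h1, h2, h3, h4⟩ := hp₀A
      have hge : ∀ j, p₀ j ≤ (p₀ + t • (Pi.single i (1:ℝ) : ((Ξ' ⊕ Ξ') ⊕ Fin 2) → ℝ)) j := by
        intro j
        simp only [Pi.add_apply, Pi.smul_apply, smul_eq_mul]
        have hs0 : (0:ℝ) ≤ (Pi.single i (1:ℝ) : ((Ξ' ⊕ Ξ') ⊕ Fin 2) → ℝ) j := by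
          rw [Pi.single_apply]; split <;> norm_num
        nlinarith
      have heq : (p₀ + t • (Pi.single i (1:ℝ) : ((Ξ' ⊕ Ξ') ⊕ Fin 2) → ℝ)) (Sum.inr 1)
          = p₀ (Sum.inr 1) := by
        simp only [Pi.add_apply, Pi.smul_apply, smul_eq_mul, Pi.single_apply]
        rw [if_neg (fun h => hi h.symm)]
        ring
      exact ⟨Q, u, hn, hs, fun ξ' => lt_of_lt_of_le (h1 ξ') (hge _),
        fun ξ' => lt_of_lt_of_le (h2 ξ') (hge _), lt_of_lt_of_le h3 (hge _), heq ▸ h4⟩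
    have hlt := hf _ hmem
    rwa [map_add, map_smul, smul_eq_mul, hcoef] at hlt
  have hc4 : 0 ≤ coef (Sum.inr 1) := by
    have hslope : -coef (Sum.inr 1) ≤ 0 := by
      refine stmt7_aux_slope (f p₀) (f xstar) (-coef (Sum.inr 1)) fun t ht => ?_
      have hmem : (p₀ - t • (Pi.single (Sum.inr 1) (1:ℝ) : ((Ξ' ⊕ Ξ') ⊕ Fin 2) → ℝ)) ∈ A := by
        obtain ⟨Q, u, hn, hs, h1, h2, h3, h4⟩ := hp₀A
        have heq : ∀ j : (Ξ' ⊕ Ξ') ⊕ Fin 2, j ≠ Sum.inr 1 →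
            (p₀ - t • (Pi.single (Sum.inr 1) (1:ℝ) : ((Ξ' ⊕ Ξ') ⊕ Fin 2) → ℝ)) j = p₀ j := by
          intro j hj
          simp only [Pi.sub_apply, Pi.smul_apply, smul_eq_mul, Pi.single_apply]
          rw [if_neg hj]
          ring
        have h5 : (p₀ - t • (Pi.single (Sum.inr 1) (1:ℝ) : ((Ξ' ⊕ Ξ') ⊕ Fin 2) → ℝ)) (Sum.inr 1)
            = p₀ (Sum.inr 1) - t := by
          simp [Pi.single_apply]
        refine ⟨Q, u, hn, hs, fun ξ' => ?_, fun ξ' => ?_, ?_, ?_⟩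
        · rw [heq _ (by simp)]; exact h1 ξ'
        · rw [heq _ (by simp)]; exact h2 ξ'
        · rw [heq _ (by simp)]; exact h3
        · rw [h5]; linarith
      have hlt := hf _ hmem
      rw [map_sub, map_smul, smul_eq_mul, hcoef] at hlt
      linarith
    linarith
  -- the main Lagrangian inequality
  have hmain : ∀ (Q : Ξ → ℝ) (u : Ξ' → ℝ), (∀ ξ, 0 ≤ Q ξ) → (∑ ξ, Q ξ) = 1 →
      (∑ ξ', g1 Q u ξ' * coef (Sum.inl (Sum.inl ξ')))
      + (∑ ξ', g2 Q u ξ' * coef (Sum.inl (Sum.inr ξ')))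
      + ((∑ ξ', u ξ') - 2 * ε) * coef (Sum.inr 0)
      + (∑ ξ, ℓ ξ * Q ξ) * coef (Sum.inr 1)
      ≤ pstar * coef (Sum.inr 1) := by
    intro Q u hn hs
    refine stmt7_aux_le _ _
      ((∑ ξ', coef (Sum.inl (Sum.inl ξ'))) + (∑ ξ', coef (Sum.inl (Sum.inr ξ')))
        + coef (Sum.inr 0) - coef (Sum.inr 1)) fun t ht => ?_
    set pt : ((Ξ' ⊕ Ξ') ⊕ Fin 2) → ℝ :=
      Sum.elim (Sum.elim (fun ξ' => g1 Q u ξ' + t) (fun ξ' => g2 Q u ξ' + t))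
        ![(∑ ξ', u ξ') - 2 * ε + t, (∑ ξ, ℓ ξ * Q ξ) - t] with hptdef
    have hptA : pt ∈ A := by
      refine ⟨Q, u, hn, hs, fun ξ' => ?_, fun ξ' => ?_, ?_, ?_⟩
      · simp only [hptdef, Sum.elim_inl]; linarith
      · simp only [hptdef, Sum.elim_inl, Sum.elim_inr]; linarith
      · simp only [hptdef, Sum.elim_inr, Matrix.cons_val_zero]; linarith
      · simp only [hptdef, Sum.elim_inr, Matrix.cons_val_one, Matrix.head_cons, Matrix.cons_val_zero]; linarith
    have hlt := hf _ hptA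
    rw [hsplit pt, hfx] at hlt
    simp only [hptdef, Sum.elim_inl, Sum.elim_inr, Matrix.cons_val_zero,
      Matrix.cons_val_one, Matrix.head_cons] at hlt
    have e1 : ∑ ξ', (g1 Q u ξ' + t) * coef (Sum.inl (Sum.inl ξ'))
        = ∑ ξ', g1 Q u ξ' * coef (Sum.inl (Sum.inl ξ'))
          + t * ∑ ξ', coef (Sum.inl (Sum.inl ξ')) := by
      rw [Finset.mul_sum, ← Finset.sum_add_distrib]
      exact Finset.sum_congr rfl fun ξ' _ => by ring
    have e2 : ∑ ξ', (g2 Q u ξ' + t) * coef (Sum.inl (Sum.inr ξ'))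
        = ∑ ξ', g2 Q u ξ' * coef (Sum.inl (Sum.inr ξ'))
          + t * ∑ ξ', coef (Sum.inl (Sum.inr ξ')) := by
      rw [Finset.mul_sum, ← Finset.sum_add_distrib]
      exact Finset.sum_congr rfl fun ξ' _ => by ring
    have e3 : t * ((∑ ξ', coef (Sum.inl (Sum.inl ξ'))) + (∑ ξ', coef (Sum.inl (Sum.inr ξ')))
        + coef (Sum.inr 0) - coef (Sum.inr 1))
        = t * (∑ ξ', coef (Sum.inl (Sum.inl ξ'))) + t * (∑ ξ', coef (Sum.inl (Sum.inr ξ')))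
          + t * coef (Sum.inr 0) - t * coef (Sum.inr 1) := by ring
    have e4 : ((∑ ξ', u ξ') - 2 * ε + t) * coef (Sum.inr 0)
        = ((∑ ξ', u ξ') - 2 * ε) * coef (Sum.inr 0) + t * coef (Sum.inr 0) := by ring
    have e5 : ((∑ ξ, ℓ ξ * Q ξ) - t) * coef (Sum.inr 1)
        = (∑ ξ, ℓ ξ * Q ξ) * coef (Sum.inr 1) - t * coef (Sum.inr 1) := by ring
    linarith
  -- single-coordinate sums
  have hsingmul : ∀ (s : ℝ) (ξ'₀ : Ξ') (c : Ξ' → ℝ),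
      ∑ ξ', (Pi.single ξ'₀ s : Ξ' → ℝ) ξ' * c ξ' = s * c ξ'₀ := by
    intro s ξ'₀ c
    simp [Pi.single_apply, ite_mul]
  have hsingsum : ∀ (s : ℝ) (ξ'₀ : Ξ'), ∑ ξ', (Pi.single ξ'₀ s : Ξ' → ℝ) ξ' = s := by
    intro s ξ'₀; simp [Pi.single_apply]
  -- the multipliers of the two absolute-value constraints sum to the TV multiplier
  have hforce : ∀ ξ'₀ : Ξ',
      coef (Sum.inr 0) - coef (Sum.inl (Sum.inl ξ'₀)) - coef (Sum.inl (Sum.inr ξ'₀)) = 0 := by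
    intro ξ'₀
    refine stmt7_aux_zero ((∑ ξ', g1 Q₀ (fun _ => 0) ξ' * coef (Sum.inl (Sum.inl ξ')))
      + (∑ ξ', g2 Q₀ (fun _ => 0) ξ' * coef (Sum.inl (Sum.inr ξ')))
      + (0 - 2 * ε) * coef (Sum.inr 0)
      + (∑ ξ, ℓ ξ * Q₀ ξ) * coef (Sum.inr 1)) (pstar * coef (Sum.inr 1)) _ fun s => ?_
    have h := hmain Q₀ (Pi.single ξ'₀ s) hQ₀n hQ₀s
    have t0 : ∑ ξ', (Pi.single ξ'₀ s : Ξ' → ℝ) ξ' = s := hsingsum s ξ'₀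
    have t1 : ∑ ξ', g1 Q₀ (Pi.single ξ'₀ s) ξ' * coef (Sum.inl (Sum.inl ξ'))
        = (∑ ξ', g1 Q₀ (fun _ => 0) ξ' * coef (Sum.inl (Sum.inl ξ')))
          - s * coef (Sum.inl (Sum.inl ξ'₀)) := by
      rw [← hsingmul s ξ'₀ (fun ξ' => coef (Sum.inl (Sum.inl ξ'))), ← Finset.sum_sub_distrib]
      refine Finset.sum_congr rfl fun ξ' _ => ?_
      simp only [hg1def]; ring
    have t2 : ∑ ξ', g2 Q₀ (Pi.single ξ'₀ s) ξ' * coef (Sum.inl (Sum.inr ξ'))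
        = (∑ ξ', g2 Q₀ (fun _ => 0) ξ' * coef (Sum.inl (Sum.inr ξ')))
          - s * coef (Sum.inl (Sum.inr ξ'₀)) := by
      rw [← hsingmul s ξ'₀ (fun ξ' => coef (Sum.inl (Sum.inr ξ'))), ← Finset.sum_sub_distrib]
      refine Finset.sum_congr rfl fun ξ' _ => ?_
      simp only [hg2def]; ring
    have t3 : ((∑ ξ', (Pi.single ξ'₀ s : Ξ' → ℝ) ξ') - 2 * ε) * coef (Sum.inr 0)
        = (0 - 2 * ε) * coef (Sum.inr 0) + s * coef (Sum.inr 0) := by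
      rw [t0]; ring
    have t4 : s * (coef (Sum.inr 0) - coef (Sum.inl (Sum.inl ξ'₀)) - coef (Sum.inl (Sum.inr ξ'₀)))
        = s * coef (Sum.inr 0) - s * coef (Sum.inl (Sum.inl ξ'₀))
          - s * coef (Sum.inl (Sum.inr ξ'₀)) := by ring
    linarith
  -- the objective multiplier is positive
  have hc4pos : 0 < coef (Sum.inr 1) := by
    rcases hc4.lt_or_eq with h | h
    · exact h
    · exfalso
      have h0 : coef (Sum.inr 1) = 0 := h.symm
      have key := hmain Q₀ u₀ hQ₀n hQ₀s
      rw [h0, mul_zero, mul_zero] at key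
      have b1 : ∀ ξ' : Ξ', δ * (-coef (Sum.inl (Sum.inl ξ')))
          ≤ g1 Q₀ u₀ ξ' * coef (Sum.inl (Sum.inl ξ')) := by
        intro ξ'
        have hc := hcoef_le (Sum.inl (Sum.inl ξ')) (by simp)
        have hg := hg1₀ ξ'
        nlinarith
      have b2 : ∀ ξ' : Ξ', δ * (-coef (Sum.inl (Sum.inr ξ')))
          ≤ g2 Q₀ u₀ ξ' * coef (Sum.inl (Sum.inr ξ')) := by
        intro ξ'
        have hc := hcoef_le (Sum.inl (Sum.inr ξ')) (by simp)
        have hg := hg2₀ ξ'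
        nlinarith
      have hb1 : δ * (∑ ξ', -coef (Sum.inl (Sum.inl ξ')))
          ≤ ∑ ξ', g1 Q₀ u₀ ξ' * coef (Sum.inl (Sum.inl ξ')) := by
        rw [Finset.mul_sum]; exact Finset.sum_le_sum fun ξ' _ => b1 ξ'
      have hb2 : δ * (∑ ξ', -coef (Sum.inl (Sum.inr ξ')))
          ≤ ∑ ξ', g2 Q₀ u₀ ξ' * coef (Sum.inl (Sum.inr ξ')) := by
        rw [Finset.mul_sum]; exact Finset.sum_le_sum fun ξ' _ => b2 ξ'
      have hb3 : ((∑ ξ', u₀ ξ') - 2 * ε) * coef (Sum.inr 0) = δ * (-coef (Sum.inr 0)) := by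
        rw [hg3₀]; ring
      have hSA : (0:ℝ) ≤ ∑ ξ', -coef (Sum.inl (Sum.inl ξ')) :=
        Finset.sum_nonneg fun ξ' _ => neg_nonneg.2 (hcoef_le _ (by simp))
      have hSB : (0:ℝ) ≤ ∑ ξ', -coef (Sum.inl (Sum.inr ξ')) :=
        Finset.sum_nonneg fun ξ' _ => neg_nonneg.2 (hcoef_le _ (by simp))
      have hSC : (0:ℝ) ≤ -coef (Sum.inr 0) := neg_nonneg.2 (hcoef_le _ (by simp))
      have htot : δ * ((∑ ξ', -coef (Sum.inl (Sum.inl ξ')))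
          + (∑ ξ', -coef (Sum.inl (Sum.inr ξ'))) + -coef (Sum.inr 0)) ≤ 0 := by
        have expand : δ * ((∑ ξ', -coef (Sum.inl (Sum.inl ξ')))
            + (∑ ξ', -coef (Sum.inl (Sum.inr ξ'))) + -coef (Sum.inr 0))
            = δ * (∑ ξ', -coef (Sum.inl (Sum.inl ξ')))
              + δ * (∑ ξ', -coef (Sum.inl (Sum.inr ξ'))) + δ * -coef (Sum.inr 0) := by ring
        linarith
      have htot0 : (∑ ξ', -coef (Sum.inl (Sum.inl ξ')))
          + (∑ ξ', -coef (Sum.inl (Sum.inr ξ'))) + -coef (Sum.inr 0) = 0 := by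
        nlinarith
      have hA0 : ∀ ξ' : Ξ', coef (Sum.inl (Sum.inl ξ')) = 0 := by
        have hz : ∑ ξ', -coef (Sum.inl (Sum.inl ξ')) = 0 := by linarith
        intro ξ'
        have := (Finset.sum_eq_zero_iff_of_nonneg
          (fun ξ' _ => neg_nonneg.2 (hcoef_le (Sum.inl (Sum.inl ξ')) (by simp)))).1 hz ξ'
          (Finset.mem_univ ξ')
        linarith [this]
      have hB0 : ∀ ξ' : Ξ', coef (Sum.inl (Sum.inr ξ')) = 0 := by
        have hz : ∑ ξ', -coef (Sum.inl (Sum.inr ξ')) = 0 := by linarith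
        intro ξ'
        have := (Finset.sum_eq_zero_iff_of_nonneg
          (fun ξ' _ => neg_nonneg.2 (hcoef_le (Sum.inl (Sum.inr ξ')) (by simp)))).1 hz ξ'
          (Finset.mem_univ ξ')
        linarith [this]
      have hC0 : coef (Sum.inr 0) = 0 := by linarith
      have hfp₀ : f p₀ = 0 := by
        rw [hsplit p₀]
        rw [hC0, h0]
        simp [hA0, hB0]
      have hlt := hf p₀ hp₀A
      rw [hfp₀, hfx, h0, mul_zero] at hlt
      exact lt_irrefl 0 hlt
  -- the dual optimal multipliers
  set lam' : Ξ' → ℝ := fun ξ' => -coef (Sum.inl (Sum.inl ξ')) / coef (Sum.inr 1) with hlam'def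
  set mu' : Ξ' → ℝ := fun ξ' => -coef (Sum.inl (Sum.inr ξ')) / coef (Sum.inr 1) with hmu'def
  have hlam' : ∀ ξ', 0 ≤ lam' ξ' := fun ξ' =>
    div_nonneg (neg_nonneg.2 (hcoef_le _ (by simp))) hc4pos.le
  have hmu' : ∀ ξ', 0 ≤ mu' ξ' := fun ξ' =>
    div_nonneg (neg_nonneg.2 (hcoef_le _ (by simp))) hc4pos.le
  set wstar : ℝ := (⨆ ξ : Ξ, (ℓ ξ + ∑ ξ', (lam' ξ' - mu' ξ') * O ξ' ξ))
      + 2 * ε * (⨆ ξ' : Ξ', (lam' ξ' + mu' ξ'))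
      + ∑ ξ', (mu' ξ' - lam' ξ') * Phat ξ' with hwstardef
  have hwT : wstar ∈ T := ⟨lam', mu', hlam', hmu', hwstardef⟩
  have hconst : ∀ ξ', lam' ξ' + mu' ξ' = -coef (Sum.inr 0) / coef (Sum.inr 1) := by
    intro ξ'
    have hfc := hforce ξ'
    simp only [hlam'def, hmu'def]
    rw [← add_div]
    congr 1
    linarith
  have hsup2 : (⨆ ξ' : Ξ', (lam' ξ' + mu' ξ')) = -coef (Sum.inr 0) / coef (Sum.inr 1) := by
    calc (⨆ ξ' : Ξ', (lam' ξ' + mu' ξ'))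
        = ⨆ _ : Ξ', -coef (Sum.inr 0) / coef (Sum.inr 1) := iSup_congr hconst
      _ = -coef (Sum.inr 0) / coef (Sum.inr 1) := ciSup_const
  obtain ⟨ξm, hξmeq, hξmle⟩ := stmt7_aux_sup (fun ξ => ℓ ξ + ∑ ξ', (lam' ξ' - mu' ξ') * O ξ' ξ)
  have hwle : wstar ≤ pstar := by
    rw [hwstardef, hξmeq, hsup2]
    set Qm : Ξ → ℝ := fun ξ => if ξ = ξm then 1 else 0 with hQmdef
    have hQmn : ∀ ξ, 0 ≤ Qm ξ := fun ξ => by rw [hQmdef]; dsimp only; split <;> norm_num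
    have hQms : ∑ ξ, Qm ξ = 1 := by simp [hQmdef]
    have hOQm : ∀ ξ', ∑ ξ, O ξ' ξ * Qm ξ = O ξ' ξm := by
      intro ξ'; simp [hQmdef, mul_ite]
    have hLQm : ∑ ξ, ℓ ξ * Qm ξ = ℓ ξm := by simp [hQmdef, mul_ite]
    have key := hmain Qm (fun _ => 0) hQmn hQms
    have k1 : ∑ ξ', g1 Qm (fun _ => 0) ξ' * coef (Sum.inl (Sum.inl ξ'))
        = ∑ ξ', (Phat ξ' - O ξ' ξm) * coef (Sum.inl (Sum.inl ξ')) := by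
      refine Finset.sum_congr rfl fun ξ' _ => ?_
      simp only [hg1def, hOQm]; ring
    have k2 : ∑ ξ', g2 Qm (fun _ => 0) ξ' * coef (Sum.inl (Sum.inr ξ'))
        = ∑ ξ', (O ξ' ξm - Phat ξ') * coef (Sum.inl (Sum.inr ξ')) := by
      refine Finset.sum_congr rfl fun ξ' _ => ?_
      simp only [hg2def, hOQm]; ring
    have k3 : ∑ ξ', (fun _ : Ξ' => (0:ℝ)) ξ' = 0 := by simp
    rw [k1, k2, k3, hLQm] at key
    rw [← mul_le_mul_iff_of_pos_right hc4pos]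
    have hdiv1 : (∑ ξ', (lam' ξ' - mu' ξ') * O ξ' ξm) * coef (Sum.inr 1)
        = ∑ ξ', (coef (Sum.inl (Sum.inr ξ')) - coef (Sum.inl (Sum.inl ξ'))) * O ξ' ξm := by
      rw [Finset.sum_mul]
      refine Finset.sum_congr rfl fun ξ' _ => ?_
      simp only [hlam'def, hmu'def]
      rw [div_sub_div_same, div_mul_eq_mul_div, div_mul_cancel₀ _ hc4pos.ne']
      ring
    have hdiv2 : (∑ ξ', (mu' ξ' - lam' ξ') * Phat ξ') * coef (Sum.inr 1)
        = ∑ ξ', (coef (Sum.inl (Sum.inl ξ')) - coef (Sum.inl (Sum.inr ξ'))) * Phat ξ' := by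
      rw [Finset.sum_mul]
      refine Finset.sum_congr rfl fun ξ' _ => ?_
      simp only [hlam'def, hmu'def]
      rw [div_sub_div_same, div_mul_eq_mul_div, div_mul_cancel₀ _ hc4pos.ne']
      ring
    have hdiv3 : (2 * ε * (-coef (Sum.inr 0) / coef (Sum.inr 1))) * coef (Sum.inr 1)
        = (0 - 2 * ε) * coef (Sum.inr 0) := by
      rw [← mul_div_assoc, div_mul_cancel₀ _ hc4pos.ne']
      ring
    have hcomb : (∑ ξ', (coef (Sum.inl (Sum.inr ξ')) - coef (Sum.inl (Sum.inl ξ'))) * O ξ' ξm)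
        + (∑ ξ', (coef (Sum.inl (Sum.inl ξ')) - coef (Sum.inl (Sum.inr ξ'))) * Phat ξ')
        = (∑ ξ', (Phat ξ' - O ξ' ξm) * coef (Sum.inl (Sum.inl ξ')))
          + (∑ ξ', (O ξ' ξm - Phat ξ') * coef (Sum.inl (Sum.inr ξ'))) := by
      rw [← Finset.sum_add_distrib, ← Finset.sum_add_distrib]
      exact Finset.sum_congr rfl fun ξ' _ => by ring
    have hexpand : ((ℓ ξm + ∑ ξ', (lam' ξ' - mu' ξ') * O ξ' ξm)
        + 2 * ε * (-coef (Sum.inr 0) / coef (Sum.inr 1))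
        + ∑ ξ', (mu' ξ' - lam' ξ') * Phat ξ') * coef (Sum.inr 1)
        = ℓ ξm * coef (Sum.inr 1)
          + (∑ ξ', (lam' ξ' - mu' ξ') * O ξ' ξm) * coef (Sum.inr 1)
          + (2 * ε * (-coef (Sum.inr 0) / coef (Sum.inr 1))) * coef (Sum.inr 1)
          + (∑ ξ', (mu' ξ' - lam' ξ') * Phat ξ') * coef (Sum.inr 1) := by ring
    linarith
  -- conclusion
  have hTbdd : BddBelow T := ⟨pstar, fun w hw => by
    rw [hpstar]; exact csSup_le hSne fun v hv => weak v hv w hw⟩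
  refine le_antisymm ?_ ?_
  · exact csSup_le hSne fun v hv => le_csInf ⟨wstar, hwT⟩ fun w hw => weak v hv w hw
  · calc sInf T ≤ wstar := csInf_le hTbdd hwT
      _ ≤ pstar := hwle
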